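/- Let F be a maxmin-fair distribution over the set 𝒮 of valid rankings. If u₁, u₂ ∈ 𝒰 belong to the same class C_k and g(u₁) ≥ g(u₂), then the expected position values satisfy E_{r∼F}[f(r(u₁))] ≥ E_{r∼F}[f(r(u₂))]. -/

import Mathlib

open Finset

/-- `v` is strictly greater than `w` in the lexicographic order. -/
def lexGT {n : ℕ} (v w : Fin n → ℝ) : Prop :=
  ∃ i, w i < v i ∧ ∀ j < i, v j = w j

/-- `v` is greater than or equal to `w` in the lexicographic order. -/
def lexGE {n : ℕ} (v w : Fin n → ℝ) : Prop := v = w ∨ lexGT v w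

/-- The vector `v` rearranged in increasing order. -/
noncomputable def sortedVec {n : ℕ} (v : Fin n → ℝ) : Fin n → ℝ :=
  v ∘ Tuple.sort v

/-- A probability distribution supported on the valid rankings `Vld`. -/
def IsDistribOn {U : Type*} [Fintype U] [DecidableEq U]
    (Vld : (U ≃ Fin (Fintype.card U)) → Prop) (p : (U ≃ Fin (Fintype.card U)) → ℝ) : Prop :=
  (∀ r, 0 ≤ p r) ∧ (∑ r : U ≃ Fin (Fintype.card U), p r = 1) ∧ (∀ r, p r ≠ 0 → Vld r)

/-- Expected value `D[u] = E_{r∼p}[f(r(u)) - g(u)]` of individual `u` under distribution `p`. -/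
def EV {U : Type*} [Fintype U] [DecidableEq U] (f : Fin (Fintype.card U) → ℝ) (g : U → ℝ)
    (p : (U ≃ Fin (Fintype.card U)) → ℝ) (u : U) : ℝ :=
  ∑ r : U ≃ Fin (Fintype.card U), p r * (f (r u) - g u)

/-- The vector of expected values, sorted in increasing order. -/
noncomputable def scovR {U : Type*} [Fintype U] [DecidableEq U]
    (f : Fin (Fintype.card U) → ℝ) (g : U → ℝ) (p : (U ≃ Fin (Fintype.card U)) → ℝ) :
    Fin (Fintype.card U) → ℝ :=
  sortedVec (fun i => EV f g p ((Fintype.equivFin U).symm i))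

/-- `F` is a maxmin-fair distribution over the valid rankings `Vld`. -/
def MaxminFair {U : Type*} [Fintype U] [DecidableEq U]
    (Vld : (U ≃ Fin (Fintype.card U)) → Prop) (f : Fin (Fintype.card U) → ℝ) (g : U → ℝ)
    (F : (U ≃ Fin (Fintype.card U)) → ℝ) : Prop :=
  IsDistribOn Vld F ∧ ∀ D, IsDistribOn Vld D → lexGE (scovR f g F) (scovR f g D)

/-- A ranking is valid if, for every prefix length `i` and class `k`, the number of
individuals of class `k` in the top `i` positions is between `lb i k` and `ub i k`. -/
def ValidLU {U : Type*} [Fintype U] {t : ℕ} (c : U → Fin t)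
    (lb ub : Fin (Fintype.card U) → Fin t → ℕ) (r : U ≃ Fin (Fintype.card U)) : Prop :=
  ∀ i : Fin (Fintype.card U), ∀ k : Fin t,
    lb i k ≤ (Finset.univ.filter (fun u => c u = k ∧ r u ≤ i)).card ∧
    (Finset.univ.filter (fun u => c u = k ∧ r u ≤ i)).card ≤ ub i k

lemma lexGT_asymm {n : ℕ} {v w : Fin n → ℝ} (h1 : lexGT v w) (h2 : lexGT w v) : False := by
  obtain ⟨i, hi, hij⟩ := h1
  obtain ⟨i', hi', hij'⟩ := h2
  rcases lt_trichotomy i i' with h | h | h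
  · exact (ne_of_gt hi) (hij' i h).symm
  · subst h; exact absurd hi' (not_lt.2 hi.le)
  · exact (ne_of_gt hi') (hij i' h).symm

lemma card_sortedVec_le {n : ℕ} (v : Fin n → ℝ) (t : ℝ) :
    (univ.filter (fun i => sortedVec v i ≤ t)).card = (univ.filter (fun i => v i ≤ t)).card := by
  apply Finset.card_bij (fun i _ => Tuple.sort v i)
  · intro a ha
    simp only [mem_filter, mem_univ, true_and] at ha ⊢
    simp only [sortedVec, Function.comp] at ha ⊢
    exact ha
  · intro a _ b _ hab; exact (Tuple.sort v).injective hab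
  · intro b hb
    refine ⟨(Tuple.sort v).symm b, ?_, by simp⟩
    simp only [mem_filter, mem_univ, true_and] at hb ⊢
    simp only [sortedVec, Function.comp] at hb ⊢
    simpa using hb

lemma lexGT_of_counts {n : ℕ} (v w : Fin n → ℝ) (t₀ : ℝ)
    (hle : ∀ t ≤ t₀, (univ.filter (fun i => w i ≤ t)).card ≤ (univ.filter (fun i => v i ≤ t)).card)
    (hlt : (univ.filter (fun i => w i ≤ t₀)).card < (univ.filter (fun i => v i ≤ t₀)).card) :
    lexGT (sortedVec w) (sortedVec v) := by
  set v' := sortedVec v with hv'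
  set w' := sortedVec w with hw'
  have hmv : Monotone v' := Tuple.monotone_sort v
  have hmw : Monotone w' := Tuple.monotone_sort w
  have hcv : ∀ t, (univ.filter (fun i => v' i ≤ t)).card = (univ.filter (fun i => v i ≤ t)).card :=
    card_sortedVec_le v
  have hcw : ∀ t, (univ.filter (fun i => w' i ≤ t)).card = (univ.filter (fun i => w i ≤ t)).card :=
    card_sortedVec_le w
  have hne : v' ≠ w' := by
    intro hEq
    rw [← hcv t₀, ← hcw t₀, hEq] at hlt
    exact lt_irrefl _ hlt
  have hSne : (univ.filter (fun i => v' i ≠ w' i)).Nonempty := by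
    by_contra hS
    apply hne
    funext i
    by_contra hi
    exact hS ⟨i, mem_filter.2 ⟨mem_univ i, hi⟩⟩
  set S := univ.filter (fun i => v' i ≠ w' i) with hS
  set i := S.min' hSne with hi
  have hiS : i ∈ S := S.min'_mem hSne
  have hieq : ∀ j < i, w' j = v' j := by
    intro j hj
    by_contra hj'
    have hjS : j ∈ S := mem_filter.2 ⟨mem_univ j, fun h => hj' h.symm⟩
    exact absurd (S.min'_le j hjS) (not_le.2 hj)
  have hvi_ne : v' i ≠ w' i := (mem_filter.1 hiS).2
  rcases lt_or_gt_of_ne hvi_ne with hlt' | hgt'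
  · exact ⟨i, hlt', hieq⟩
  exfalso
  set tt := w' i with htt
  have h1 : (i : ℕ) + 1 ≤ (univ.filter (fun j => w' j ≤ tt)).card := by
    have hsub : Finset.Iic i ⊆ univ.filter (fun j => w' j ≤ tt) := by
      intro j hj
      exact mem_filter.2 ⟨mem_univ j, hmw (Finset.mem_Iic.1 hj)⟩
    calc (i : ℕ) + 1 = (Finset.Iic i).card := (Fin.card_Iic i).symm
      _ ≤ _ := Finset.card_le_card hsub
  have h2 : (univ.filter (fun j => v' j ≤ tt)).card ≤ (i : ℕ) := by
    have hsub : univ.filter (fun j => v' j ≤ tt) ⊆ Finset.Iio i := by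
      intro j hj
      have hj' : v' j ≤ tt := (mem_filter.1 hj).2
      rw [Finset.mem_Iio]
      by_contra hji
      exact absurd (le_trans (hmv (not_lt.1 hji)) hj') (not_le.2 hgt')
    calc (univ.filter (fun j => v' j ≤ tt)).card ≤ (Finset.Iio i).card :=
        Finset.card_le_card hsub
      _ = (i : ℕ) := Fin.card_Iio i
  have h3 : ¬ tt ≤ t₀ := by
    intro ht
    have := hle tt ht
    rw [← hcv tt, ← hcw tt] at this
    omega
  have h4 : (univ.filter (fun j => v j ≤ t₀)).card ≤ (univ.filter (fun j => w j ≤ t₀)).card := by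
    rw [← hcv t₀, ← hcw t₀]
    apply Finset.card_le_card
    intro j hj
    have hj' : v' j ≤ t₀ := (mem_filter.1 hj).2
    have hjt : v' j < tt := lt_of_le_of_lt hj' (not_le.1 h3)
    have hji : j < i := by
      by_contra hji
      exact absurd (le_trans (hmv (not_lt.1 hji)) hjt.le) (not_le.2 hgt')
    exact mem_filter.2 ⟨mem_univ j, by rw [hieq j hji]; exact hj'⟩
  omega

/-- Intra-group meritocracy: for two individuals of the same class with `g u₂ ≤ g u₁`,
the maxmin-fair distribution gives `u₁` at least the expected position value of `u₂`. -/
theorem intra_group_meritocracy {U : Type*} [Fintype U] [DecidableEq U] {t : ℕ}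
    (c : U → Fin t) (lb ub : Fin (Fintype.card U) → Fin t → ℕ)
    (f : Fin (Fintype.card U) → ℝ) (hf : Antitone f) (g : U → ℝ)
    (hS : ∃ r, ValidLU c lb ub r)
    (F : (U ≃ Fin (Fintype.card U)) → ℝ) (hF : MaxminFair (ValidLU c lb ub) f g F)
    (u₁ u₂ : U) (hclass : c u₁ = c u₂) (hg : g u₂ ≤ g u₁) :
    ∑ r : U ≃ Fin (Fintype.card U), F r * f (r u₂) ≤
      ∑ r : U ≃ Fin (Fintype.card U), F r * f (r u₁) := by
  by_contra hcon
  push_neg at hcon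
  obtain ⟨⟨hFpos, hFsum, hFsupp⟩, hFopt⟩ := hF
  set B : U → ℝ := fun u => ∑ r : U ≃ Fin (Fintype.card U), F r * f (r u) with hB
  have hne12 : u₁ ≠ u₂ := fun hEq => by rw [hEq] at hcon; exact lt_irrefl _ hcon
  set τ : U ≃ U := Equiv.swap u₁ u₂ with hτ
  have hττ : ∀ x, τ (τ x) = x := fun x => Equiv.swap_apply_self _ _ _
  have hcτ : ∀ x, c (τ x) = c x := by
    intro x
    rcases eq_or_ne x u₁ with rfl | h1
    · rw [hτ, Equiv.swap_apply_left, hclass]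
    rcases eq_or_ne x u₂ with rfl | h2
    · rw [hτ, Equiv.swap_apply_right, hclass]
    · rw [hτ, Equiv.swap_apply_of_ne_of_ne h1 h2]
  have htt : Function.Involutive (fun r : U ≃ Fin (Fintype.card U) => τ.trans r) := by
    intro r; ext u; simp only [Equiv.trans_apply, hττ]
  have hreindex : ∀ φ : (U ≃ Fin (Fintype.card U)) → ℝ,
      (∑ r : U ≃ Fin (Fintype.card U), φ (τ.trans r)) = ∑ r : U ≃ Fin (Fintype.card U), φ r :=
    fun φ => Fintype.sum_bijective _ htt.bijective _ _ (fun r => rfl)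
  have hBswap : ∀ u, (∑ r : U ≃ Fin (Fintype.card U), F (τ.trans r) * f (r u)) = B (τ u) := by
    intro u
    have h := hreindex (fun s => F s * f (s (τ u)))
    simp only [Equiv.trans_apply, hττ] at h
    exact h
  set D : (U ≃ Fin (Fintype.card U)) → ℝ := fun r => (F (τ.trans r) + F r) / 2 with hD
  have hDpos : ∀ r, 0 ≤ D r := fun r =>
    div_nonneg (add_nonneg (hFpos _) (hFpos _)) (by norm_num)
  have hDsum : (∑ r : U ≃ Fin (Fintype.card U), D r) = 1 := by
    rw [hD]
    rw [← Finset.sum_div, Finset.sum_add_distrib, hreindex F, hFsum]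
    norm_num
  have hcard : ∀ (r : U ≃ Fin (Fintype.card U)) (i : Fin (Fintype.card U)) (k : Fin t),
      (univ.filter (fun u => c u = k ∧ (τ.trans r) u ≤ i)).card
        = (univ.filter (fun u => c u = k ∧ r u ≤ i)).card := by
    intro r i k
    apply Finset.card_bij (fun u _ => τ u)
    · intro a ha
      simp only [mem_filter, mem_univ, true_and] at ha ⊢
      simp only [Equiv.trans_apply] at ha ⊢
      exact ⟨by rw [hcτ]; exact ha.1, ha.2⟩
    · intro a _ b _ hab; exact τ.injective hab
    · intro b hb
      simp only [mem_filter, mem_univ, true_and, Equiv.trans_apply] at hb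
      refine ⟨τ b, ?_, hττ b⟩
      simp only [mem_filter, mem_univ, true_and]
      simp only [Equiv.trans_apply, hττ, hcτ]
      exact hb
  have hDsupp : ∀ r, D r ≠ 0 → ValidLU c lb ub r := by
    intro r hr
    have hor : F (τ.trans r) ≠ 0 ∨ F r ≠ 0 := by
      by_contra hboth
      push_neg at hboth
      apply hr
      rw [hD]
      simp [hboth.1, hboth.2]
    rcases hor with h | h
    · have hv := hFsupp _ h
      intro i k
      have hik := hv i k
      rw [hcard r i k] at hik
      exact hik
    · exact hFsupp _ h
  have hEV : ∀ (p : (U ≃ Fin (Fintype.card U)) → ℝ),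
      (∑ r : U ≃ Fin (Fintype.card U), p r) = 1 →
      ∀ u, EV f g p u = (∑ r : U ≃ Fin (Fintype.card U), p r * f (r u)) - g u := by
    intro p hp u
    unfold EV
    simp only [mul_sub]
    rw [Finset.sum_sub_distrib, ← Finset.sum_mul, hp, one_mul]
  have hEVF : ∀ u, EV f g F u = B u - g u := fun u => hEV F hFsum u
  have hDB : ∀ u, (∑ r : U ≃ Fin (Fintype.card U), D r * f (r u)) = (B (τ u) + B u) / 2 := by
    intro u
    have hterm : ∀ r : U ≃ Fin (Fintype.card U),
        D r * f (r u) = (F (τ.trans r) * f (r u) + F r * f (r u)) / 2 := by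
      intro r; rw [hD]; ring
    rw [Finset.sum_congr rfl (fun r _ => hterm r), ← Finset.sum_div,
      Finset.sum_add_distrib, hBswap u]
  have hEVD : ∀ u, EV f g D u = (B (τ u) + B u) / 2 - g u := fun u => by
    rw [hEV D hDsum u, hDB u]
  have hτ1 : τ u₁ = u₂ := by rw [hτ]; exact Equiv.swap_apply_left _ _
  have hτ2 : τ u₂ = u₁ := by rw [hτ]; exact Equiv.swap_apply_right _ _
  set t₀ : ℝ := B u₁ - g u₁ with ht₀
  have hDu₁ : t₀ < EV f g D u₁ := by
    rw [hEVD, hτ1, ht₀]; linarith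
  have hDu₂ : t₀ < EV f g D u₂ := by
    rw [hEVD, hτ2, ht₀]; linarith
  have hDother : ∀ u, u ≠ u₁ → u ≠ u₂ → EV f g D u = EV f g F u := by
    intro u h1 h2
    have hτu : τ u = u := by rw [hτ]; exact Equiv.swap_apply_of_ne_of_ne h1 h2
    rw [hEVD, hEVF, hτu]; ring
  have hsub : ∀ (s : ℝ), s ≤ t₀ →
      (univ.filter (fun u : U => EV f g D u ≤ s)) ⊆ (univ.filter (fun u => EV f g F u ≤ s)) := by
    intro s hs u hu
    simp only [mem_filter, mem_univ, true_and] at hu ⊢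
    have h1 : u ≠ u₁ := by rintro rfl; exact absurd hu (not_le.2 (lt_of_le_of_lt hs hDu₁))
    have h2 : u ≠ u₂ := by rintro rfl; exact absurd hu (not_le.2 (lt_of_le_of_lt hs hDu₂))
    rw [← hDother u h1 h2]; exact hu
  have hltU : (univ.filter (fun u : U => EV f g D u ≤ t₀)).card
      < (univ.filter (fun u : U => EV f g F u ≤ t₀)).card := by
    apply Finset.card_lt_card
    rw [Finset.ssubset_iff_of_subset (hsub t₀ le_rfl)]
    refine ⟨u₁, ?_, ?_⟩
    · simp only [mem_filter, mem_univ, true_and, hEVF u₁, ht₀, le_refl]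
    · simp only [mem_filter, mem_univ, true_and]
      exact not_le.2 hDu₁
  have hcntUF : ∀ (p : (U ≃ Fin (Fintype.card U)) → ℝ) (s : ℝ),
      (univ.filter (fun i : Fin (Fintype.card U) => EV f g p ((Fintype.equivFin U).symm i) ≤ s)).card
        = (univ.filter (fun u : U => EV f g p u ≤ s)).card := by
    intro p s
    apply Finset.card_bij (fun i _ => (Fintype.equivFin U).symm i)
    · intro a ha
      simp only [mem_filter, mem_univ, true_and] at ha ⊢
      exact ha
    · intro a _ b _ hab; exact (Fintype.equivFin U).symm.injective hab
    · intro b hb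
      refine ⟨Fintype.equivFin U b, ?_, by simp⟩
      simp only [mem_filter, mem_univ, true_and] at hb ⊢
      simpa using hb
  have hkey : lexGT (scovR f g D) (scovR f g F) := by
    apply lexGT_of_counts _ _ t₀
    · intro s hs
      rw [hcntUF D s, hcntUF F s]
      exact Finset.card_le_card (hsub s hs)
    · rw [hcntUF D t₀, hcntUF F t₀]
      exact hltU
  have hDdist : IsDistribOn (ValidLU c lb ub) D := ⟨hDpos, hDsum, hDsupp⟩
  rcases hFopt D hDdist with hEq | hGT
  · obtain ⟨i, hi, _⟩ := hkey
    rw [hEq] at hi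
    exact lt_irrefl _ hi
  · exact lexGT_asymm hkey hGT
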